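/- Q_k divides Q_n if and only if k divides n (for k, n ≥ 1). -/

import Mathlib

open SimpleGraph

/-- `H` divides `G`: the edge set of `G` can be partitioned into edge sets of
subgraphs of `G`, each isomorphic to `H`. -/
def GraphDivides {α β : Type} (H : SimpleGraph α) (G : SimpleGraph β) : Prop :=
  ∃ (ι : Type) (f : ι → G.Subgraph),
    (∀ i, Nonempty (H ≃g (f i).coe)) ∧
    ∀ e ∈ G.edgeSet, ∃! i, e ∈ (f i).edgeSet

/-- The `n`-dimensional hypercube graph. -/
def cube (n : ℕ) : SimpleGraph (Fin n → ZMod 2) where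
  Adj x y := hammingDist x y = 1
  symm := ⟨fun x y h => by simpa [hammingDist_comm] using h⟩
  loopless := ⟨fun x h => by simp [hammingDist_self] at h⟩

lemma zmod2_ne {a b : ZMod 2} : a ≠ b ↔ b = a + 1 := by revert a b; decide

lemma zmod2_self_ne (a : ZMod 2) : a ≠ a + 1 := by revert a; decide

lemma cube_adj_iff {n : ℕ} {x y : Fin n → ZMod 2} :
    (cube n).Adj x y ↔ ∃ c, y = Function.update x c (x c + 1) := by
  constructor
  · intro h
    have h1 : ({c | x c ≠ y c} : Finset (Fin n)).card = 1 := h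
    obtain ⟨c, hc⟩ := Finset.card_eq_one.mp h1
    have hmem : ∀ c', x c' ≠ y c' ↔ c' = c := by
      intro c'
      rw [← Finset.mem_singleton, ← hc]
      simp
    refine ⟨c, funext fun c' => ?_⟩
    by_cases hcc : c' = c
    · subst hcc
      rw [Function.update_self]
      exact (zmod2_ne.mp ((hmem c').mpr rfl)).symm ▸ rfl
    · rw [Function.update_of_ne hcc]
      by_contra hne
      exact hcc ((hmem c').mp (fun hxy => hne hxy.symm))
  · rintro ⟨c, rfl⟩
    show ({c' | x c' ≠ Function.update x c (x c + 1) c'} : Finset (Fin n)).card = 1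
    have : ({c' | x c' ≠ Function.update x c (x c + 1) c'} : Finset (Fin n)) = {c} := by
      ext c'
      simp only [Finset.mem_filter, Finset.mem_univ, true_and, Finset.mem_singleton]
      by_cases hcc : c' = c
      · subst hcc; simp [zmod2_self_ne]
      · simp [Function.update_of_ne hcc, hcc]
    rw [this, Finset.card_singleton]

lemma cube_nbhd (k : ℕ) (x : Fin k → ZMod 2) :
    Nat.card ((cube k).neighborSet x) = k := by
  have hset : (cube k).neighborSet x = Set.range (fun c => Function.update x c (x c + 1)) := by
    ext y
    simp only [mem_neighborSet, Set.mem_range]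
    rw [cube_adj_iff]
    exact ⟨fun ⟨c, h⟩ => ⟨c, h.symm⟩, fun ⟨c, h⟩ => ⟨c, h.symm⟩⟩
  have hinj : Function.Injective (fun c => Function.update x c (x c + 1)) := by
    intro c c' h
    by_contra hne
    have := congrFun h c
    simp only [Function.update_self, Function.update_of_ne (fun hh => hne hh)] at this
    exact zmod2_self_ne (x c) this.symm
  rw [hset, Nat.card_range_of_injective hinj, Nat.card_eq_fintype_card, Fintype.card_fin]

lemma fwd (k n : ℕ) (h : GraphDivides (cube k) (cube n)) : k ∣ n := by
  classical
  obtain ⟨ι, f, hiso, huniq⟩ := h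
  set δ : Fin n → (Fin n → ZMod 2) := fun c => Function.update 0 c 1 with hδ
  have hadj : ∀ c, (cube n).Adj 0 (δ c) := by
    intro c
    refine cube_adj_iff.mpr ⟨c, ?_⟩
    simp [hδ]
  have hedge : ∀ c, s((0 : Fin n → ZMod 2), δ c) ∈ (cube n).edgeSet := fun c =>
    (SimpleGraph.mem_edgeSet _).mpr (hadj c)
  choose idx hidx1 hidx2 using fun c => huniq _ (hedge c)
  have key : ∀ w ∈ Finset.univ.image idx, (Finset.univ.filter fun c => idx c = w).card = k := by
    intro w hw
    obtain ⟨c₀, _, hc₀⟩ := Finset.mem_image.mp hw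
    have h0 : (0 : Fin n → ZMod 2) ∈ (f w).verts :=
      (f w).edge_vert (Subgraph.mem_edgeSet.mp (hc₀ ▸ hidx1 c₀))
    obtain ⟨φ⟩ := hiso w
    -- Nat.card of the neighbor set of 0 in f w is k
    have hk1 : Nat.card ((f w).neighborSet 0) = k := by
      calc Nat.card ((f w).neighborSet 0)
          = Nat.card ((f w).coe.neighborSet ⟨0, h0⟩) :=
            (Nat.card_congr (Subgraph.coeNeighborSetEquiv ⟨0, h0⟩)).symm
        _ = Nat.card ((cube k).neighborSet (φ.symm ⟨0, h0⟩)) :=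
            Nat.card_congr (φ.symm.mapNeighborSet ⟨0, h0⟩)
        _ = k := cube_nbhd k _
    -- bijection between the fiber and the neighbor set
    have hbij : Function.Bijective
        (fun c : {c // idx c = w} => (⟨δ c.1, by
          have := hidx1 c.1
          rw [c.2] at this
          exact Subgraph.mem_edgeSet.mp this⟩ : (f w).neighborSet 0)) := by
      constructor
      · rintro ⟨c, hc⟩ ⟨c', hc'⟩ h
        have h2 := congrFun (congrArg Subtype.val h) c
        simp only [hδ] at h2
        by_contra hne
        have hne' : c ≠ c' := fun hh => hne (by simp [hh])
        rw [Function.update_of_ne hne'] at h2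
        simp at h2
      · rintro ⟨y, hy⟩
        have hadj' : (cube n).Adj 0 y := (f w).adj_sub hy
        obtain ⟨c, rfl⟩ := cube_adj_iff.mp hadj'
        have hyδ : Function.update (0 : Fin n → ZMod 2) c ((0 : Fin n → ZMod 2) c + 1) = δ c := by
          simp [hδ]
        have hmem2 : s((0 : Fin n → ZMod 2), δ c) ∈ (f w).edgeSet := by
          rw [← hyδ]; exact Subgraph.mem_edgeSet.mpr hy
        have : idx c = w := (hidx2 c w hmem2).symm
        exact ⟨⟨c, this⟩, rfl⟩
    have := Nat.card_eq_of_bijective _ hbij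
    rw [hk1] at this
    rw [← this, Nat.card_eq_fintype_card, Fintype.card_subtype]
  have : n = (Finset.univ.image idx).card * k := by
    have h1 := Finset.card_eq_sum_card_fiberwise
      (f := idx) (s := Finset.univ) (t := Finset.univ.image idx)
      (fun x _ => Finset.mem_image_of_mem idx (Finset.mem_univ x))
    rw [Finset.card_univ, Fintype.card_fin] at h1
    rw [Finset.sum_congr rfl key, Finset.sum_const, smul_eq_mul] at h1
    exact h1
  exact ⟨_, by rw [this, mul_comm]⟩

section Construction
variable (k m : ℕ)

/-- vertices of the subcube: block `b` free, other blocks fixed to `g`. -/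
def blockVerts (b : Fin m) (g : Fin k → {j : Fin m // j ≠ b} → ZMod 2) :
    Set (Fin (k * m) → ZMod 2) :=
  {x | ∀ (i : Fin k) (j : Fin m) (h : j ≠ b), x (finProdFinEquiv (i, j)) = g i ⟨j, h⟩}

def blockSub (b : Fin m) (g : Fin k → {j : Fin m // j ≠ b} → ZMod 2) :
    (cube (k * m)).Subgraph where
  verts := blockVerts k m b g
  Adj x y := (cube (k * m)).Adj x y ∧ x ∈ blockVerts k m b g ∧ y ∈ blockVerts k m b g
  adj_sub h := h.1
  edge_vert h := h.2.1
  symm := ⟨fun x y ⟨h1, h2, h3⟩ => ⟨h1.symm, h3, h2⟩⟩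

/-- extend a `k`-bit vector to a vertex of the subcube. -/
def ext0 (b : Fin m) (g : Fin k → {j : Fin m // j ≠ b} → ZMod 2)
    (z : Fin k → ZMod 2) : Fin (k * m) → ZMod 2 :=
  fun c => if h : (finProdFinEquiv.symm c).2 = b then z (finProdFinEquiv.symm c).1
           else g (finProdFinEquiv.symm c).1 ⟨(finProdFinEquiv.symm c).2, h⟩

variable {k m}

lemma ext0_apply_block (b : Fin m) (g) (z : Fin k → ZMod 2) (i : Fin k) :
    ext0 k m b g z (finProdFinEquiv (i, b)) = z i := by
  simp [ext0]

lemma ext0_apply_off (b : Fin m) (g) (z : Fin k → ZMod 2) (i : Fin k) (j : Fin m)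
    (h : j ≠ b) : ext0 k m b g z (finProdFinEquiv (i, j)) = g i ⟨j, h⟩ := by
  simp [ext0, h]

lemma ext0_mem (b : Fin m) (g) (z : Fin k → ZMod 2) :
    ext0 k m b g z ∈ blockVerts k m b g :=
  fun i j h => ext0_apply_off b g z i j h

lemma ext0_eq_of_mem (b : Fin m) (g) {x : Fin (k * m) → ZMod 2}
    (hx : x ∈ blockVerts k m b g) :
    ext0 k m b g (fun i => x (finProdFinEquiv (i, b))) = x := by
  funext c
  obtain ⟨⟨i, j⟩, rfl⟩ := finProdFinEquiv.surjective c
  by_cases h : j = b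
  · subst h; rw [ext0_apply_block]
  · rw [ext0_apply_off b g _ i j h, hx i j h]

lemma ext0_ham (b : Fin m) (g) (z w : Fin k → ZMod 2) :
    hammingDist (ext0 k m b g z) (ext0 k m b g w) = hammingDist z w := by
  show ({c | ext0 k m b g z c ≠ ext0 k m b g w c} : Finset _).card
      = ({i | z i ≠ w i} : Finset _).card
  refine Finset.card_bij' (fun c _ => (finProdFinEquiv.symm c).1)
    (fun i _ => finProdFinEquiv (i, b)) ?_ ?_ ?_ ?_
  · intro c hc
    simp only [Finset.mem_filter, Finset.mem_univ, true_and] at hc ⊢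
    obtain ⟨⟨i, j⟩, rfl⟩ := finProdFinEquiv.surjective c
    by_cases h : j = b
    · subst h
      rw [ext0_apply_block, ext0_apply_block] at hc
      simpa using hc
    · rw [ext0_apply_off b g z i j h, ext0_apply_off b g w i j h] at hc
      exact absurd rfl hc
  · intro i hi
    simp only [Finset.mem_filter, Finset.mem_univ, true_and] at hi ⊢
    rw [ext0_apply_block, ext0_apply_block]
    exact hi
  · intro c hc
    simp only [Finset.mem_filter, Finset.mem_univ, true_and] at hc
    obtain ⟨⟨i, j⟩, rfl⟩ := finProdFinEquiv.surjective c
    by_cases h : j = b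
    · subst h; simp
    · rw [ext0_apply_off b g z i j h, ext0_apply_off b g w i j h] at hc
      exact absurd rfl hc
  · intro i hi
    simp

def blockIso (b : Fin m) (g : Fin k → {j : Fin m // j ≠ b} → ZMod 2) :
    cube k ≃g (blockSub k m b g).coe where
  toFun z := ⟨ext0 k m b g z, ext0_mem b g z⟩
  invFun x := fun i => x.1 (finProdFinEquiv (i, b))
  left_inv z := funext fun i => ext0_apply_block b g z i
  right_inv x := Subtype.ext (ext0_eq_of_mem b g x.2)
  map_rel_iff' := by
    intro z w
    show (blockSub k m b g).Adj _ _ ↔ _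
    constructor
    · intro h
      have h1 : hammingDist (ext0 k m b g z) (ext0 k m b g w) = 1 := h.1
      rw [ext0_ham] at h1
      exact h1
    · intro h
      refine ⟨?_, ext0_mem b g z, ext0_mem b g w⟩
      show hammingDist (ext0 k m b g z) (ext0 k m b g w) = 1
      rw [ext0_ham]
      exact h

end Construction

lemma bwd (k m : ℕ) : GraphDivides (cube k) (cube (k * m)) := by
  classical
  refine ⟨Σ b : Fin m, (Fin k → {j : Fin m // j ≠ b} → ZMod 2),
    fun p => blockSub k m p.1 p.2, fun p => ⟨blockIso p.1 p.2⟩, ?_⟩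
  intro e he
  induction e using Sym2.inductionOn with
  | hf x y =>
    have hadj : (cube (k * m)).Adj x y := (SimpleGraph.mem_edgeSet _).mp he
    obtain ⟨c, rfl⟩ := cube_adj_iff.mp hadj
    obtain ⟨⟨i₀, b₀⟩, rfl⟩ := finProdFinEquiv.surjective c
    refine ⟨⟨b₀, fun i j => x (finProdFinEquiv (i, j.1))⟩, ?_, ?_⟩
    · refine Subgraph.mem_edgeSet.mpr ⟨hadj, fun i j h => rfl, fun i j h => ?_⟩
      rw [Function.update_of_ne]
      intro heq
      exact h (congrArg Prod.snd (finProdFinEquiv.injective heq))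
    · rintro ⟨b, g⟩ hmem
      obtain ⟨-, hx, hy⟩ := Subgraph.mem_edgeSet.mp hmem
      have hb : b = b₀ := by
        by_contra hbb
        have h1 := hx i₀ b₀ (fun hh => hbb hh.symm)
        have h2 := hy i₀ b₀ (fun hh => hbb hh.symm)
        rw [Function.update_self] at h2
        exact zmod2_self_ne _ (h1.trans h2.symm)
      subst hb
      refine congrArg (Sigma.mk b) (funext fun i => funext fun j => ?_)
      exact (hx i j.1 j.2).symm


theorem cube_divides_cube_iff (k n : ℕ) (hk : 1 ≤ k) (hn : 1 ≤ n) :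
    GraphDivides (cube k) (cube n) ↔ k ∣ n := by
  constructor
  · exact fwd k n
  · rintro ⟨m, rfl⟩
    exact bwd k m
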